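/- For f(x,y) = y²+(μ₁x+μ₃)y-(x³+μ₂x²+μ₄x+μ₆) and any t, the identity f(x⟨t⟩, Y) = (Y - y⟨t⟩)(Y - y⟨t'⟩) holds as polynomials in Y over formal Laurent series, and consequently f_y(x⟨t⟩, y⟨t⟩) = 2y⟨t⟩ + μ₁x⟨t⟩ + μ₃ = y⟨t⟩ - y⟨t'⟩. -/

import Mathlib

noncomputable section

/-- The coefficient ring `ℤ[μ₁,μ₂,μ₃,μ₄,μ₆]`. -/
abbrev CoefRing : Type := MvPolynomial (Fin 5) ℤ

def μ1 : CoefRing := MvPolynomial.X 0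
def μ2 : CoefRing := MvPolynomial.X 1
def μ3 : CoefRing := MvPolynomial.X 2
def μ4 : CoefRing := MvPolynomial.X 3
def μ6 : CoefRing := MvPolynomial.X 4

open PowerSeries in
/-- The functional equation `s = (1 + μ₂s + μ₄s² + μ₆s³)t² + (μ₁s + μ₃s²)t`
satisfied by `s = 1/x` in the arithmetic parameter `t = -x/y` of the curve
`y² + (μ₁x+μ₃)y = x³ + μ₂x² + μ₄x + μ₆`. -/
def SFunEq (s : PowerSeries CoefRing) : Prop :=
  s = (1 + C μ2 * s + C μ4 * s ^ 2 + C μ6 * s ^ 3) * X ^ 2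
      + (C μ1 * s + C μ3 * s ^ 2) * X

/-- Embedding of power series into formal Laurent series. -/
abbrev toL : PowerSeries CoefRing →+* LaurentSeries CoefRing :=
  HahnSeries.ofPowerSeries ℤ CoefRing

/-- The Laurent series `t`. -/
def tL : LaurentSeries CoefRing := HahnSeries.single (1 : ℤ) (1 : CoefRing)

/-- Constant Laurent series. -/
abbrev CL : CoefRing →+* LaurentSeries CoefRing := HahnSeries.C

/-- `IsXY s x y` says: `s` is the canonical solution of the functional equation,
`x = 1/s` (the expansion `x⟨t⟩` of the `x`-coordinate) and `y = -x/t`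
(the expansion `y⟨t⟩` of the `y`-coordinate). -/
structure IsXY (s : PowerSeries CoefRing)
    (x y : LaurentSeries CoefRing) : Prop where
  s0 : PowerSeries.constantCoeff s = 0
  seq : SFunEq s
  hx : x * toL s = 1
  hy : y * tL = -x

/-- `f(x⟨t⟩, Y) = (Y - y⟨t⟩)(Y - y⟨t'⟩)` as polynomials in `Y` over formal
Laurent series (here `y⟨t'⟩ = -x⟨t⟩/t'`), and consequently
`f_y(x⟨t⟩,y⟨t⟩) = 2y⟨t⟩ + μ₁x⟨t⟩ + μ₃ = y⟨t⟩ - y⟨t'⟩`. -/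
theorem statement11 (s : PowerSeries CoefRing) (x y : LaurentSeries CoefRing)
    (h : IsXY s x y) (T' : PowerSeries CoefRing)
    (hT' : toL T' * (y + CL μ1 * x + CL μ3) = x)
    (Y' : LaurentSeries CoefRing) (hY' : Y' * toL T' = -x) :
    (Polynomial.X ^ 2 + Polynomial.C (CL μ1 * x + CL μ3) * Polynomial.X
        - Polynomial.C (x ^ 3 + CL μ2 * x ^ 2 + CL μ4 * x + CL μ6)
      = (Polynomial.X - Polynomial.C y) * (Polynomial.X - Polynomial.C Y')) ∧
    2 * y + CL μ1 * x + CL μ3 = y - Y' := by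
  set S : LaurentSeries CoefRing := toL s with hSdef
  set T : LaurentSeries CoefRing := tL with hTdef
  have hx0 : x ≠ 0 := by
    intro hx
    have := h.hx
    rw [hx, zero_mul] at this
    exact one_ne_zero this.symm
  -- the functional equation, mapped to Laurent series
  have hS : S = (1 + CL μ2 * S + CL μ4 * S ^ 2 + CL μ6 * S ^ 3) * T ^ 2
      + (CL μ1 * S + CL μ3 * S ^ 2) * T := by
    have := congrArg toL h.seq
    simpa [hSdef, hTdef, tL, map_add, map_mul, map_pow, map_one,
      HahnSeries.ofPowerSeries_X, HahnSeries.ofPowerSeries_C] using this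
  have h1 : x * S = 1 := h.hx
  have h2 : y * T = -x := h.hy
  -- the curve equation
  have hcurve : y ^ 2 + (CL μ1 * x + CL μ3) * y
      = x ^ 3 + CL μ2 * x ^ 2 + CL μ4 * x + CL μ6 := by
    have hx2 : x ^ 2 ≠ 0 := pow_ne_zero 2 hx0
    apply mul_left_cancel₀ hx2
    have Pd : (x:LaurentSeries CoefRing) ^ 3 + CL μ2 * x ^ 2 + CL μ4 * x + CL μ6
        = x ^ 3 + CL μ2 * x ^ 2 + CL μ4 * x + CL μ6 := rfl
    linear_combination (x ^ 3 * y ^ 2) * hS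
      + ((CL μ2 * x ^ 2 + CL μ4 * x * (1 + x * S)
            + CL μ6 * (1 + x * S + (x * S) ^ 2)) * y ^ 2 * T ^ 2
          + (CL μ1 * x ^ 2 + CL μ3 * x * (1 + x * S)) * y ^ 2 * T
          - x ^ 2 * y ^ 2) * h1
      + ((x ^ 3 + CL μ2 * x ^ 2 + CL μ4 * x + CL μ6) * (y * T - x)
          + (CL μ1 * x ^ 2 + CL μ3 * x) * y) * h2
  -- Y' = -(y + μ₁x + μ₃)
  have hY'eq : Y' = -(y + CL μ1 * x + CL μ3) := by
    apply mul_right_cancel₀ hx0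
    calc Y' * x = Y' * (toL T' * (y + CL μ1 * x + CL μ3)) := by rw [hT']
    _ = (Y' * toL T') * (y + CL μ1 * x + CL μ3) := by ring
    _ = -x * (y + CL μ1 * x + CL μ3) := by rw [hY']
    _ = -(y + CL μ1 * x + CL μ3) * x := by ring
  constructor
  · rw [hY'eq, ← hcurve]
    simp only [map_add, map_mul, map_neg, map_pow]
    ring
  · rw [hY'eq]; ring
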